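/- (Lower bound for the regularized cost.) Set M_τ := (τk/(2(1−γ)))·log(σ_min(R)/(πτ)). Then for every stable K ∈ ℝ^{k×n} and every symmetric positive definite Σ ∈ ℝ^{k×k}, C(K,Σ) ≥ ( μ + (γ/(1−γ))σ_min(W) )·‖P_K‖ + M_τ. -/

import Mathlib

open Matrix


noncomputable def spec {m l : ℕ} (M : Matrix (Fin m) (Fin l) ℝ) : ℝ :=
  ‖LinearMap.toContinuousLinearMap (Matrix.toEuclideanLin M)‖

noncomputable def sigMin {m l : ℕ} (M : Matrix (Fin m) (Fin l) ℝ) : ℝ :=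
  sInf {r : ℝ | ∃ x : EuclideanSpace ℝ (Fin l), ‖x‖ = 1 ∧
    r = ‖LinearMap.toContinuousLinearMap (Matrix.toEuclideanLin M) x‖}

noncomputable def frob {m l : ℕ} (M : Matrix (Fin m) (Fin l) ℝ) : ℝ :=
  Real.sqrt (Matrix.trace (Mᵀ * M))

def loewner {m : ℕ} (X Y : Matrix (Fin m) (Fin m) ℝ) : Prop :=
  (Y - X).PosSemidef

noncomputable def Pmat {n k : ℕ} (γ : ℝ) (A : Matrix (Fin n) (Fin n) ℝ)
    (B : Matrix (Fin n) (Fin k) ℝ) (Q : Matrix (Fin n) (Fin n) ℝ)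
    (R : Matrix (Fin k) (Fin k) ℝ) (K : Matrix (Fin k) (Fin n) ℝ) :
    Matrix (Fin n) (Fin n) ℝ :=
  ∑' t : ℕ, γ ^ t • (((A - B * K)ᵀ) ^ t * (Q + Kᵀ * R * K) * (A - B * K) ^ t)

noncomputable def Emat {n k : ℕ} (γ : ℝ) (A : Matrix (Fin n) (Fin n) ℝ)
    (B : Matrix (Fin n) (Fin k) ℝ) (Q : Matrix (Fin n) (Fin n) ℝ)
    (R : Matrix (Fin k) (Fin k) ℝ) (K : Matrix (Fin k) (Fin n) ℝ) :
    Matrix (Fin k) (Fin n) ℝ :=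
  -(γ • (Bᵀ * Pmat γ A B Q R K * (A - B * K))) + R * K

noncomputable def Smat {n k : ℕ} (γ : ℝ) (A : Matrix (Fin n) (Fin n) ℝ)
    (B : Matrix (Fin n) (Fin k) ℝ) (W : Matrix (Fin n) (Fin n) ℝ)
    (D₀ : Matrix (Fin n) (Fin n) ℝ) (K : Matrix (Fin k) (Fin n) ℝ)
    (Sg : Matrix (Fin k) (Fin k) ℝ) : Matrix (Fin n) (Fin n) ℝ :=
  ∑' t : ℕ, γ ^ t •
    ((A - B * K) ^ t * D₀ * ((A - B * K)ᵀ) ^ t +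
      ∑ s ∈ Finset.Icc 1 t,
        (A - B * K) ^ (t - s) * (B * Sg * Bᵀ + W) * ((A - B * K)ᵀ) ^ (t - s))

noncomputable def Cost {n k : ℕ} (γ τ : ℝ) (A : Matrix (Fin n) (Fin n) ℝ)
    (B : Matrix (Fin n) (Fin k) ℝ) (Q : Matrix (Fin n) (Fin n) ℝ)
    (R : Matrix (Fin k) (Fin k) ℝ) (W : Matrix (Fin n) (Fin n) ℝ)
    (D₀ : Matrix (Fin n) (Fin n) ℝ) (K : Matrix (Fin k) (Fin n) ℝ)
    (Sg : Matrix (Fin k) (Fin k) ℝ) : ℝ :=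
  Matrix.trace (D₀ * Pmat γ A B Q R K) +
    (1 / (1 - γ)) *
      (Matrix.trace (Sg * (R + γ • (Bᵀ * Pmat γ A B Q R K * B))) -
        (τ / 2) * ((k : ℝ) + Real.log ((2 * Real.pi) ^ k * Sg.det)) +
        γ * Matrix.trace (W * Pmat γ A B Q R K))

noncomputable def fent {n k : ℕ} (γ τ : ℝ) (A : Matrix (Fin n) (Fin n) ℝ)
    (B : Matrix (Fin n) (Fin k) ℝ) (Q : Matrix (Fin n) (Fin n) ℝ)
    (R : Matrix (Fin k) (Fin k) ℝ) (K : Matrix (Fin k) (Fin n) ℝ)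
    (Sg : Matrix (Fin k) (Fin k) ℝ) : ℝ :=
  (τ / (2 * (1 - γ))) * Real.log Sg.det -
    (1 / (1 - γ)) * Matrix.trace (Sg * (R + γ • (Bᵀ * Pmat γ A B Q R K * B)))

open scoped MatrixOrder

namespace MyAux
open Matrix
variable {m : ℕ}

lemma br (X : Matrix (Fin m) (Fin m) ℝ) (y : Fin m → ℝ) :
    y ⬝ᵥ (X *ᵥ y) =
      (inner ℝ ((WithLp.equiv 2 (Fin m → ℝ)).symm y)
        (Matrix.toEuclideanLin X ((WithLp.equiv 2 (Fin m → ℝ)).symm y)) : ℝ) := by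
  simp [PiLp.inner_apply, toEuclideanLin_apply, dotProduct, mul_comm]

lemma repr_lem {X : Matrix (Fin m) (Fin m) ℝ} (hX : X.IsHermitian)
    (x : EuclideanSpace ℝ (Fin m)) (i : Fin m) :
    hX.eigenvectorBasis.repr (Matrix.toEuclideanLin X x) i
      = hX.eigenvalues i * hX.eigenvectorBasis.repr x i := by
  rw [OrthonormalBasis.repr_apply_apply, OrthonormalBasis.repr_apply_apply]
  have hs := (isHermitian_iff_isSymmetric.1 hX)
  rw [← hs (hX.eigenvectorBasis i) x]
  have hv : Matrix.toEuclideanLin X (hX.eigenvectorBasis i)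
      = hX.eigenvalues i • hX.eigenvectorBasis i := by
    ext j
    exact congrFun (hX.mulVec_eigenvectorBasis i) j
  rw [hv, real_inner_smul_left]

lemma inner_expand {X : Matrix (Fin m) (Fin m) ℝ} (hX : X.IsHermitian)
    (x : EuclideanSpace ℝ (Fin m)) :
    (inner ℝ x (Matrix.toEuclideanLin X x) : ℝ)
      = ∑ i, hX.eigenvalues i * (hX.eigenvectorBasis.repr x i)^2 := by
  rw [← hX.eigenvectorBasis.repr.inner_map_map x (Matrix.toEuclideanLin X x)]
  rw [PiLp.inner_apply]
  refine Finset.sum_congr rfl fun i _ => ?_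
  rw [repr_lem hX x i]
  simp [RCLike.star_def, starRingEnd_apply]
  ring

lemma norm_expand {X : Matrix (Fin m) (Fin m) ℝ} (hX : X.IsHermitian)
    (x : EuclideanSpace ℝ (Fin m)) :
    ‖x‖^2 = ∑ i, (hX.eigenvectorBasis.repr x i)^2 := by
  rw [← real_inner_self_eq_norm_sq]
  rw [← hX.eigenvectorBasis.repr.inner_map_map x x, PiLp.inner_apply]
  refine Finset.sum_congr rfl fun i _ => ?_
  simp [RCLike.star_def, starRingEnd_apply]

lemma normT_expand {X : Matrix (Fin m) (Fin m) ℝ} (hX : X.IsHermitian)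
    (x : EuclideanSpace ℝ (Fin m)) :
    ‖Matrix.toEuclideanLin X x‖^2
      = ∑ i, (hX.eigenvalues i)^2 * (hX.eigenvectorBasis.repr x i)^2 := by
  rw [norm_expand hX]
  refine Finset.sum_congr rfl fun i _ => ?_
  rw [repr_lem hX x i]
  ring

lemma trace_eq_sum_eigen {X : Matrix (Fin m) (Fin m) ℝ} (hX : X.IsHermitian) :
    X.trace = ∑ i, hX.eigenvalues i := by
  rw [hX.trace_eq_sum_eigenvalues]
  simp

lemma sig_bdd (X : Matrix (Fin m) (Fin m) ℝ) :
    BddBelow {r : ℝ | ∃ x : EuclideanSpace ℝ (Fin m), ‖x‖ = 1 ∧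
      r = ‖LinearMap.toContinuousLinearMap (Matrix.toEuclideanLin X) x‖} :=
  ⟨0, fun r ⟨x, _, hr⟩ => hr ▸ norm_nonneg _⟩

lemma sig_nonempty (hm : 0 < m) (X : Matrix (Fin m) (Fin m) ℝ) :
    Set.Nonempty {r : ℝ | ∃ x : EuclideanSpace ℝ (Fin m), ‖x‖ = 1 ∧
      r = ‖LinearMap.toContinuousLinearMap (Matrix.toEuclideanLin X) x‖} := by
  refine ⟨_, EuclideanSpace.single (⟨0, hm⟩ : Fin m) (1:ℝ), ?_, rfl⟩
  simp [EuclideanSpace.norm_single]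

lemma sigMin_nonneg (hm : 0 < m) (X : Matrix (Fin m) (Fin m) ℝ) : 0 ≤ sigMin X :=
  le_csInf (sig_nonempty hm X) (fun r ⟨x, _, hr⟩ => hr ▸ norm_nonneg _)

lemma sigMin_le_eigen {X : Matrix (Fin m) (Fin m) ℝ} (hX : X.PosSemidef) (i : Fin m) :
    sigMin X ≤ hX.1.eigenvalues i := by
  apply csInf_le (sig_bdd X)
  refine ⟨hX.1.eigenvectorBasis i, hX.1.eigenvectorBasis.orthonormal.1 i, ?_⟩
  show _ = ‖Matrix.toEuclideanLin X (hX.1.eigenvectorBasis i)‖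
  have hv : Matrix.toEuclideanLin X (hX.1.eigenvectorBasis i)
      = hX.1.eigenvalues i • hX.1.eigenvectorBasis i := by
    ext j; exact congrFun (hX.1.mulVec_eigenvectorBasis i) j
  rw [hv, norm_smul, hX.1.eigenvectorBasis.orthonormal.1 i, mul_one,
    Real.norm_eq_abs, abs_of_nonneg (hX.eigenvalues_nonneg i)]

lemma quad_ge_sigMin {X : Matrix (Fin m) (Fin m) ℝ} (hX : X.PosSemidef)
    (x : EuclideanSpace ℝ (Fin m)) :
    sigMin X * ‖x‖^2 ≤ (inner ℝ x (Matrix.toEuclideanLin X x) : ℝ) := by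
  rw [inner_expand hX.1, norm_expand hX.1 x, Finset.mul_sum]
  exact Finset.sum_le_sum fun i _ =>
    mul_le_mul_of_nonneg_right (sigMin_le_eigen hX i) (sq_nonneg _)

lemma sub_sigMin_smul_posSemidef {X : Matrix (Fin m) (Fin m) ℝ} (hX : X.PosSemidef) :
    (X - sigMin X • (1 : Matrix (Fin m) (Fin m) ℝ)).PosSemidef := by
  refine Matrix.PosSemidef.of_dotProduct_mulVec_nonneg ?_ ?_
  · have h1 : ((sigMin X • (1 : Matrix (Fin m) (Fin m) ℝ))).IsHermitian := by
      simp [Matrix.IsHermitian, conjTranspose_smul]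
    exact hX.1.sub h1
  · intro y
    have h2 : star y = y := by simp
    rw [h2, sub_mulVec, dotProduct_sub, smul_mulVec, one_mulVec,
      dotProduct_smul, smul_eq_mul]
    have h3 := quad_ge_sigMin hX ((WithLp.equiv 2 (Fin m → ℝ)).symm y)
    rw [← br] at h3
    have h4 : y ⬝ᵥ y = ‖(WithLp.equiv 2 (Fin m → ℝ)).symm y‖^2 := by
      have := br (1 : Matrix (Fin m) (Fin m) ℝ) y
      rw [one_mulVec] at this
      have h5 : Matrix.toEuclideanLin (1 : Matrix (Fin m) (Fin m) ℝ)
          ((WithLp.equiv 2 (Fin m → ℝ)).symm y) = (WithLp.equiv 2 (Fin m → ℝ)).symm y := by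
        ext j; simp [Matrix.toEuclideanLin_apply, one_mulVec]
      rw [this, h5, real_inner_self_eq_norm_sq]
    rw [h4]
    linarith

lemma sigMin_pos (hm : 0 < m) {X : Matrix (Fin m) (Fin m) ℝ} (hX : X.PosDef) :
    0 < sigMin X := by
  haveI : Nonempty (Fin m) := ⟨⟨0, hm⟩⟩
  set lmin := Finset.univ.inf' Finset.univ_nonempty hX.1.eigenvalues with hl
  have hlpos : 0 < lmin := by
    rw [hl, Finset.lt_inf'_iff]
    exact fun i _ => hX.eigenvalues_pos i
  have : lmin ≤ sigMin X := by
    apply le_csInf (sig_nonempty hm X)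
    rintro r ⟨x, hx1, rfl⟩
    have h1 : (inner ℝ x (Matrix.toEuclideanLin X x) : ℝ) ≤
        ‖LinearMap.toContinuousLinearMap (Matrix.toEuclideanLin X) x‖ := by
      calc (inner ℝ x (Matrix.toEuclideanLin X x) : ℝ)
          ≤ ‖x‖ * ‖Matrix.toEuclideanLin X x‖ := real_inner_le_norm _ _
        _ = ‖LinearMap.toContinuousLinearMap (Matrix.toEuclideanLin X) x‖ := by
            rw [hx1, one_mul]; rfl
    have h2 : lmin ≤ (inner ℝ x (Matrix.toEuclideanLin X x) : ℝ) := by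
      rw [inner_expand hX.1]
      calc lmin = lmin * ‖x‖^2 := by rw [hx1]; ring
        _ = ∑ i, lmin * (hX.1.eigenvectorBasis.repr x i)^2 := by
            rw [norm_expand hX.1 x, Finset.mul_sum]
        _ ≤ _ := Finset.sum_le_sum fun i _ =>
            mul_le_mul_of_nonneg_right (Finset.inf'_le _ (Finset.mem_univ i)) (sq_nonneg _)
    linarith
  linarith

lemma trace_nonneg' {X : Matrix (Fin m) (Fin m) ℝ} (hX : X.PosSemidef) : 0 ≤ X.trace := by
  rw [trace_eq_sum_eigen hX.1]
  exact Finset.sum_nonneg fun i _ => hX.eigenvalues_nonneg i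

lemma spec_le_trace {X : Matrix (Fin m) (Fin m) ℝ} (hX : X.PosSemidef) :
    spec X ≤ X.trace := by
  apply ContinuousLinearMap.opNorm_le_bound _ (trace_nonneg' hX)
  intro x
  have h1 : ‖Matrix.toEuclideanLin X x‖^2 ≤ (X.trace * ‖x‖)^2 := by
    rw [normT_expand hX.1 x, mul_pow, norm_expand hX.1 x, Finset.mul_sum]
    refine Finset.sum_le_sum fun i _ => mul_le_mul_of_nonneg_right ?_ (sq_nonneg _)
    have h2 : hX.1.eigenvalues i ≤ X.trace := by
      rw [trace_eq_sum_eigen hX.1]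
      exact Finset.single_le_sum (fun j _ => hX.eigenvalues_nonneg j) (Finset.mem_univ i)
    have := hX.eigenvalues_nonneg i
    nlinarith
  have h2 : (0:ℝ) ≤ X.trace * ‖x‖ := mul_nonneg (trace_nonneg' hX) (norm_nonneg _)
  have h3 : (0:ℝ) ≤ ‖Matrix.toEuclideanLin X x‖ := norm_nonneg _
  have h4 : ‖(LinearMap.toContinuousLinearMap (Matrix.toEuclideanLin X)) x‖
      = ‖Matrix.toEuclideanLin X x‖ := rfl
  rw [h4]
  nlinarith

lemma psd_smul {X : Matrix (Fin m) (Fin m) ℝ} (hX : X.PosSemidef) {c : ℝ} (hc : 0 ≤ c) :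
    (c • X).PosSemidef := by
  refine Matrix.PosSemidef.of_dotProduct_mulVec_nonneg ?_ ?_
  · simpa [Matrix.IsHermitian, conjTranspose_smul] using congrArg (c • ·) hX.1
  · intro y
    rw [smul_mulVec, dotProduct_smul, smul_eq_mul]
    exact mul_nonneg hc (hX.dotProduct_mulVec_nonneg y)

lemma pd_smul {X : Matrix (Fin m) (Fin m) ℝ} (hX : X.PosDef) {c : ℝ} (hc : 0 < c) :
    (c • X).PosDef := by
  refine Matrix.PosDef.of_dotProduct_mulVec_pos ?_ ?_
  · simpa [Matrix.IsHermitian, conjTranspose_smul] using congrArg (c • ·) hX.1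
  · intro y hy
    rw [smul_mulVec, dotProduct_smul, smul_eq_mul]
    exact mul_pos hc (hX.dotProduct_mulVec_pos hy)

lemma trace_mul_psd_nonneg {X Y : Matrix (Fin m) (Fin m) ℝ}
    (hX : X.PosSemidef) (hY : Y.PosSemidef) : 0 ≤ (X * Y).trace := by
  have hs : CFC.sqrt X * CFC.sqrt X = X :=
    CFC.sqrt_mul_sqrt_self X (Matrix.nonneg_iff_posSemidef.mpr hX)
  have h1 : (X * Y).trace = (CFC.sqrt X * Y * CFC.sqrt X).trace := by
    conv_lhs => rw [← hs]
    exact (trace_mul_cycle (CFC.sqrt X) Y (CFC.sqrt X)).symm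
  rw [h1]
  refine trace_nonneg' ?_
  have h2 := hY.mul_mul_conjTranspose_same (CFC.sqrt X)
  rwa [(Matrix.nonneg_iff_posSemidef.mp (CFC.sqrt_nonneg X)).1] at h2

lemma det_ge_pow {M : Matrix (Fin m) (Fin m) ℝ} (hM : M.IsHermitian) {c : ℝ} (hc : 0 ≤ c)
    (h : (M - c • (1 : Matrix (Fin m) (Fin m) ℝ)).PosSemidef) : c ^ m ≤ M.det := by
  have key : ∀ i, c ≤ hM.eigenvalues i := by
    intro i
    set v := hM.eigenvectorBasis i with hv
    have h0 := h.dotProduct_mulVec_nonneg ((WithLp.equiv 2 (Fin m → ℝ)) v)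
    rw [show star ((WithLp.equiv 2 (Fin m → ℝ)) v) = ((WithLp.equiv 2 (Fin m → ℝ)) v)
      from by simp, br, Equiv.symm_apply_apply] at h0
    have hT : Matrix.toEuclideanLin (M - c • (1 : Matrix (Fin m) (Fin m) ℝ)) v
        = hM.eigenvalues i • v - c • v := by
      ext j
      have h5 : (Matrix.toEuclideanLin (M - c • (1 : Matrix (Fin m) (Fin m) ℝ)) v) j
          = ((M - c • (1 : Matrix (Fin m) (Fin m) ℝ)) *ᵥ v) j := rfl
      rw [h5, sub_mulVec, smul_mulVec, one_mulVec]
      have h6 := congrFun (hM.mulVec_eigenvectorBasis i) j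
      simp only [Pi.sub_apply, Pi.smul_apply, smul_eq_mul] at h6 ⊢
      have h7 : (M *ᵥ v) j = hM.eigenvalues i * v j := h6
      rw [h7]
      rfl
    rw [hT, inner_sub_right, real_inner_smul_right, real_inner_smul_right,
      real_inner_self_eq_norm_sq, hM.eigenvectorBasis.orthonormal.1 i] at h0
    norm_num at h0
    linarith
  have hdet : M.det = ∏ i, hM.eigenvalues i := by
    simpa using hM.det_eq_prod_eigenvalues
  rw [hdet]
  calc c ^ m = ∏ _i : Fin m, c := by simp
    _ ≤ ∏ i, hM.eigenvalues i :=
        Finset.prod_le_prod (fun _ _ => hc) (fun i _ => key i)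

lemma log_det_le {M : Matrix (Fin m) (Fin m) ℝ} (hM : M.PosDef) :
    Real.log M.det ≤ M.trace - m := by
  have hdet : M.det = ∏ i, hM.1.eigenvalues i := by
    simpa using hM.1.det_eq_prod_eigenvalues
  rw [hdet, Real.log_prod (fun i _ => (hM.eigenvalues_pos i).ne'),
    trace_eq_sum_eigen hM.1]
  have : ∀ i ∈ Finset.univ, Real.log (hM.1.eigenvalues i) ≤ hM.1.eigenvalues i - 1 :=
    fun i _ => Real.log_le_sub_one_of_pos (hM.eigenvalues_pos i)
  calc ∑ i, Real.log (hM.1.eigenvalues i) ≤ ∑ i, (hM.1.eigenvalues i - 1) :=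
        Finset.sum_le_sum this
    _ = (∑ i, hM.1.eigenvalues i) - m := by
        rw [Finset.sum_sub_distrib]; simp

lemma posSemidef_tsum {f : ℕ → Matrix (Fin m) (Fin m) ℝ} (hf : ∀ t, (f t).PosSemidef) :
    (∑' t, f t).PosSemidef := by
  by_cases h : Summable f
  · refine Matrix.PosSemidef.of_dotProduct_mulVec_nonneg ?_ ?_
    · have hc : Continuous fun M : Matrix (Fin m) (Fin m) ℝ => Mᴴ := by
        apply continuous_pi; intro i; apply continuous_pi; intro j
        exact continuous_star.comp (continuous_apply_apply j i)
      have hmap := h.hasSum.map (Matrix.conjTransposeAddEquiv (Fin m) (Fin m) ℝ).toAddMonoidHom hc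
      simp only [AddEquiv.toAddMonoidHom_eq_coe] at hmap
      have h2 : HasSum (fun t => (f t)ᴴ) ((∑' t, f t)ᴴ) := hmap
      have h3 : (fun t => (f t)ᴴ) = f := funext fun t => (hf t).1
      rw [h3] at h2
      exact h2.unique h.hasSum
    · intro y
      have hc : Continuous fun M : Matrix (Fin m) (Fin m) ℝ => star y ⬝ᵥ (M *ᵥ y) := by
        simp only [dotProduct, Matrix.mulVec]
        apply continuous_finset_sum; intro i _
        apply Continuous.mul continuous_const
        apply continuous_finset_sum; intro j _
        exact (continuous_apply_apply i j).mul continuous_const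
      let g : Matrix (Fin m) (Fin m) ℝ →+ ℝ := {
        toFun := fun M => star y ⬝ᵥ (M *ᵥ y)
        map_zero' := by simp
        map_add' := by
          intro a b
          show star y ⬝ᵥ ((a + b) *ᵥ y) = star y ⬝ᵥ (a *ᵥ y) + star y ⬝ᵥ (b *ᵥ y)
          rw [add_mulVec, dotProduct_add] }
      have hmap := h.hasSum.map g hc
      have h2 : (0:ℝ) ≤ ∑' t, (⇑g ∘ f) t := tsum_nonneg fun t => (hf t).dotProduct_mulVec_nonneg y
      rw [hmap.tsum_eq] at h2
      exact h2
  · rw [tsum_eq_zero_of_not_summable h]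
    exact .zero

end MyAux

set_option maxHeartbeats 1600000 in
/-- Lower bound for the regularized cost: `C(K,Σ) ≥ (μ + γ/(1−γ)·σ_min(W))·‖P_K‖ + M_τ`. -/
theorem stmt8 (n k : ℕ) (hn : 0 < n) (hk : 0 < k)
    (γ τ : ℝ) (hγ0 : 0 < γ) (hγ1 : γ < 1) (hτ : 0 < τ)
    (A : Matrix (Fin n) (Fin n) ℝ) (B : Matrix (Fin n) (Fin k) ℝ)
    (Q : Matrix (Fin n) (Fin n) ℝ) (hQ : Q.PosSemidef)
    (R : Matrix (Fin k) (Fin k) ℝ) (hR : R.PosDef)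
    (W : Matrix (Fin n) (Fin n) ℝ) (hW : W.PosSemidef)
    (D₀ : Matrix (Fin n) (Fin n) ℝ) (hD₀ : D₀.PosSemidef) (hμ : 0 < sigMin D₀)
    (K : Matrix (Fin k) (Fin n) ℝ) (hK : spec (A - B * K) < 1 / Real.sqrt γ)
    (Sg : Matrix (Fin k) (Fin k) ℝ) (hSg : Sg.PosDef) :
    (sigMin D₀ + (γ / (1 - γ)) * sigMin W) * spec (Pmat γ A B Q R K) +
        (τ * k / (2 * (1 - γ))) * Real.log (sigMin R / (Real.pi * τ)) ≤
      Cost γ τ A B Q R W D₀ K Sg := by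
  classical
  have h1γ : 0 < 1 - γ := by linarith
  set P := Pmat γ A B Q R K with hPdef
  have hP : P.PosSemidef := by
    apply MyAux.posSemidef_tsum
    intro t
    apply MyAux.psd_smul _ (pow_nonneg hγ0.le t)
    have hN : (Q + Kᵀ * R * K).PosSemidef := by
      apply hQ.add
      have := hR.posSemidef.conjTranspose_mul_mul_same K
      rwa [conjTranspose_eq_transpose_of_trivial] at this
    rw [← transpose_pow, ← conjTranspose_eq_transpose_of_trivial]
    exact hN.conjTranspose_mul_mul_same _
  have hPe : spec P ≤ P.trace := MyAux.spec_le_trace hP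
  have hspec0 : 0 ≤ spec P := norm_nonneg _
  -- trace lower bounds
  have traceLB : ∀ (Z : Matrix (Fin n) (Fin n) ℝ), Z.PosSemidef →
      sigMin Z * spec P ≤ (Z * P).trace := by
    intro Z hZ
    have h3 := MyAux.trace_mul_psd_nonneg (MyAux.sub_sigMin_smul_posSemidef hZ) hP
    rw [sub_mul, trace_sub, smul_mul_assoc, one_mul, trace_smul, smul_eq_mul] at h3
    have h4 : sigMin Z * spec P ≤ sigMin Z * P.trace :=
      mul_le_mul_of_nonneg_left hPe (MyAux.sigMin_nonneg hn Z)
    linarith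
  have hD : sigMin D₀ * spec P ≤ (D₀ * P).trace := traceLB D₀ hD₀
  have hWt : sigMin W * spec P ≤ (W * P).trace := traceLB W hW
  have hWn : 0 ≤ sigMin W := MyAux.sigMin_nonneg hn W
  -- entropy part
  set M' := R + γ • (Bᵀ * P * B) with hM'def
  have hBPB : (γ • (Bᵀ * P * B)).PosSemidef := by
    apply MyAux.psd_smul _ hγ0.le
    have := hP.conjTranspose_mul_mul_same B
    rwa [conjTranspose_eq_transpose_of_trivial] at this
  have hM' : M'.PosDef := hR.add_posSemidef hBPB
  have hσR : 0 < sigMin R := MyAux.sigMin_pos hk hR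
  have hMR : (M' - sigMin R • (1 : Matrix (Fin k) (Fin k) ℝ)).PosSemidef := by
    have heq : M' - sigMin R • (1 : Matrix (Fin k) (Fin k) ℝ)
        = (R - sigMin R • (1 : Matrix (Fin k) (Fin k) ℝ)) + γ • (Bᵀ * P * B) := by
      rw [hM'def]; abel
    rw [heq]
    exact (MyAux.sub_sigMin_smul_posSemidef hR.posSemidef).add hBPB
  have hdetM' : sigMin R ^ k ≤ M'.det := MyAux.det_ge_pow hM'.isHermitian hσR.le hMR
  have hdetM'pos : 0 < M'.det := hM'.det_pos
  set G := CFC.sqrt Sg with hGdef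
  have hGpsd : G.PosSemidef := Matrix.nonneg_iff_posSemidef.mp (CFC.sqrt_nonneg Sg)
  have hGG : G * G = Sg :=
    CFC.sqrt_mul_sqrt_self Sg (Matrix.nonneg_iff_posSemidef.mpr hSg.posSemidef)
  have hdetSg : 0 < Sg.det := hSg.det_pos
  have hdetG : G.det ≠ 0 := by
    intro h0
    rw [← hGG, det_mul, h0, mul_zero] at hdetSg
    exact lt_irrefl _ hdetSg
  have hGMG : (G * M' * G).PosDef := by
    refine Matrix.PosDef.of_dotProduct_mulVec_pos ?_ ?_
    · rw [show G * M' * G = Gᴴ * M' * G from by rw [hGpsd.1]]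
      exact isHermitian_conjTranspose_mul_mul G hM'.isHermitian
    · intro x hx
      have hinj : Function.Injective (G.mulVec) :=
        mulVec_injective_iff_isUnit.mpr ((isUnit_iff_isUnit_det G).mpr (Ne.isUnit hdetG))
      have hGx : G *ᵥ x ≠ 0 := by
        intro h0
        exact hx (hinj (by rw [h0, mulVec_zero]))
      have h5 := hM'.dotProduct_mulVec_pos hGx
      have h6 : G * M' * G = Gᴴ * M' * G := by rw [hGpsd.1]
      rw [h6]
      simpa only [star_mulVec, dotProduct_mulVec, vecMul_vecMul] using h5
  have hτ2 : (0:ℝ) < 2 / τ := by positivity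
  have hX : ((2/τ) • (G * M' * G)).PosDef := MyAux.pd_smul hGMG hτ2
  have hlog := MyAux.log_det_le hX
  have htr : ((2/τ) • (G * M' * G)).trace = (2/τ) * (Sg * M').trace := by
    rw [trace_smul, smul_eq_mul, trace_mul_cycle G M' G, mul_assoc, ← mul_assoc G G M', hGG]
  have hdet : ((2/τ) • (G * M' * G)).det = (2/τ)^k * (Sg.det * M'.det) := by
    rw [det_smul, det_mul, det_mul, Fintype.card_fin]
    rw [show G.det * M'.det * G.det = (G.det * G.det) * M'.det from by ring, ← det_mul, hGG]
  rw [htr, hdet] at hlog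
  have hπ : (0:ℝ) < Real.pi := Real.pi_pos
  have hlogexp : Real.log ((2/τ)^k * (Sg.det * M'.det))
      = k * Real.log (2/τ) + Real.log Sg.det + Real.log M'.det := by
    rw [Real.log_mul (by positivity) (by positivity),
      Real.log_mul hdetSg.ne' hdetM'pos.ne', Real.log_pow]
    push_cast
    ring
  rw [hlogexp] at hlog
  -- trace (Sg * M') lower bound
  have hTrS : (τ/2) * ((k:ℝ) + k * Real.log (2/τ) + Real.log Sg.det + Real.log M'.det)
      ≤ (Sg * M').trace := by
    have h7 : (k:ℝ) + (k * Real.log (2/τ) + Real.log Sg.det + Real.log M'.det)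
        ≤ (2/τ) * (Sg * M').trace := by linarith
    have h8 := mul_le_mul_of_nonneg_left h7 (le_of_lt (by positivity : (0:ℝ) < τ/2))
    have h9 : (τ/2) * ((2/τ) * (Sg * M').trace) = (Sg * M').trace := by
      field_simp
    linarith [h8, h9.le]
  have hlogdetM' : (k:ℝ) * Real.log (sigMin R) ≤ Real.log M'.det := by
    have := Real.log_le_log (by positivity) hdetM'
    rwa [Real.log_pow] at this
  have hlog2pi : Real.log ((2 * Real.pi)^k * Sg.det)
      = k * Real.log (2 * Real.pi) + Real.log Sg.det := by
    rw [Real.log_mul (by positivity) hdetSg.ne', Real.log_pow]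
  have hL : Real.log (sigMin R / (Real.pi * τ))
      = Real.log (sigMin R) - Real.log Real.pi - Real.log τ := by
    rw [Real.log_div hσR.ne' (by positivity), Real.log_mul hπ.ne' hτ.ne']
    ring
  have hlog2τ : Real.log (2/τ) = Real.log 2 - Real.log τ :=
    Real.log_div (by norm_num) hτ.ne'
  have hlog2π : Real.log (2 * Real.pi) = Real.log 2 + Real.log Real.pi :=
    Real.log_mul (by norm_num) hπ.ne'
  have f8 : (τ * k / 2) * Real.log (sigMin R / (Real.pi * τ))
      ≤ (Sg * M').trace - (τ/2) * ((k:ℝ) + Real.log ((2 * Real.pi)^k * Sg.det)) := by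
    rw [hlog2pi, hL, hlog2π]
    have hτk : (0:ℝ) ≤ τ * k := by positivity
    nlinarith [hTrS, hlogdetM', hlog2τ, hτ.le]
  -- final assembly
  have hγdiv : 0 ≤ 1 / (1 - γ) := by positivity
  have inner : (τ * k / 2) * Real.log (sigMin R / (Real.pi * τ)) + γ * (sigMin W * spec P)
      ≤ (Sg * M').trace - (τ/2) * ((k:ℝ) + Real.log ((2 * Real.pi)^k * Sg.det))
        + γ * (W * P).trace := by
    have := mul_le_mul_of_nonneg_left hWt hγ0.le
    linarith
  have step := add_le_add hD (mul_le_mul_of_nonneg_left inner hγdiv)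
  have hCost : Cost γ τ A B Q R W D₀ K Sg
      = (D₀ * P).trace + (1 / (1 - γ)) *
        ((Sg * M').trace - (τ/2) * ((k:ℝ) + Real.log ((2 * Real.pi)^k * Sg.det))
          + γ * (W * P).trace) := by
    rw [Cost]
  rw [hCost]
  have hid : ∀ (e L w μ' : ℝ), (μ' + (γ/(1-γ))*w)*e + (τ*(k:ℝ)/(2*(1-γ)))*L
      = μ'*e + (1/(1-γ))*((τ*(k:ℝ)/2)*L + γ*(w*e)) := by
    intro e L w μ'
    field_simp
    ring
  exact le_trans (le_of_eq (hid _ _ _ _)) step
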